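/- The operators X̃₁^±, X̃₂^±, H̃ map Γ₀(L_ξ) into itself, and on Γ₀(L_ξ) they satisfy the defining relations of 𝒜̃(𝓛): (i) H̃∘X̃ᵢ^± − X̃ᵢ^±∘H̃ = ±αᵢ·X̃ᵢ^± for i = 1,2; (ii) (X̃ᵢ^± ∘ X̃ᵢ^∓ f)(x,y) = Pᵢ(xα+yβ ∓ αᵢ/2)·f(x,y) for all f ∈ Γ₀(L_ξ) and i = 1,2; (iii) X̃₁^+ ∘ X̃₂^− = X̃₂^− ∘ X̃₁^+ and X̃₁^− ∘ X̃₂^+ = X̃₂^+ ∘ X̃₁^−. -/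
import Mathlib


open Complex

noncomputable section
open scoped Classical

/-- The face lattice `F = ℤα + ℤβ ⊆ ℝ`. -/
def latF (α β : ℝ) : Set ℝ := {u | ∃ x y : ℤ, u = x * α + y * β}

/-- The vertex lattice `V = F + (α+β)/2`. -/
def latV (α β : ℝ) : Set ℝ := {u | ∃ x y : ℤ, u = x * α + y * β + (α + β) / 2}

/-- The vertical edge lattice `E₁ = F + α/2`. -/
def latE1 (α β : ℝ) : Set ℝ := {u | ∃ x y : ℤ, u = x * α + y * β + α / 2}

/-- The horizontal edge lattice `E₂ = F + β/2`. -/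
def latE2 (α β : ℝ) : Set ℝ := {u | ∃ x y : ℤ, u = x * α + y * β + β / 2}

/-- An `(m,n)`-periodic higher spin vertex configuration: a pair of finitely supported
multiplicity functions, supported on `E₁` resp. `E₂`, satisfying the current
conservation rule. -/
structure Config (α β : ℝ) (ℒ₁ ℒ₂ : ℝ → ℕ) : Prop where
  supp1 : ∀ u : ℝ, ℒ₁ u ≠ 0 → u ∈ latE1 α β
  supp2 : ∀ u : ℝ, ℒ₂ u ≠ 0 → u ∈ latE2 α β
  fin1 : (Function.support ℒ₁).Finite
  fin2 : (Function.support ℒ₂).Finite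
  conserv : ∀ v ∈ latV α β,
    ℒ₁ (v + β / 2) + ℒ₂ (v + α / 2) = ℒ₁ (v - β / 2) + ℒ₂ (v - α / 2)

/-- `Pᵢ(u) = ∏_{e} (u-e)^{ℒᵢ(e)}` as a function on `ℂ` (a finite product). -/
def PfunC (ℒ : ℝ → ℕ) (u : ℂ) : ℂ := ∏ᶠ e : ℝ, (u - (e : ℂ)) ^ ℒ e

/-- `Pᵢ(u) = ∏_{e} (u-e)^{ℒᵢ(e)}` as a real-valued function on `ℝ`. -/
def PfunR (ℒ : ℝ → ℕ) (u : ℝ) : ℝ := ∏ᶠ e : ℝ, (u - e) ^ ℒ e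

/-- `lᵢ(u) = Σ_{e > u} ℒᵢ(e)`. -/
def lfun (ℒ : ℝ → ℕ) (u : ℝ) : ℕ := ∑ᶠ e : ℝ, if u < e then ℒ e else 0

/-- The square root `qᵢ(e) = 𝐢^{lᵢ(e)}·|Pᵢ(e)|^{1/2}`. -/
def qfun (ℒ : ℝ → ℕ) (e : ℝ) : ℂ := Complex.I ^ lfun ℒ e * (Real.sqrt |PfunR ℒ e| : ℂ)

/-- The difference operator `X̃₁^s` (`s = 1` for `+`, `s = -1` for `−`):
`(X̃₁^s f)(x,y) = q₁(xα+yβ − s·α/2)·f(x−s, y)`. -/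
def opX1 (q : ℝ → ℂ) (α β : ℝ) (s : ℤ) (f : ℤ × ℤ → ℂ) : ℤ × ℤ → ℂ :=
  fun p => q (p.1 * α + p.2 * β - s * (α / 2)) * f (p.1 - s, p.2)

/-- The difference operator `X̃₂^s`:
`(X̃₂^s f)(x,y) = q₂(xα+yβ − s·β/2)·f(x, y−s)`. -/
def opX2 (q : ℝ → ℂ) (α β : ℝ) (s : ℤ) (f : ℤ × ℤ → ℂ) : ℤ × ℤ → ℂ :=
  fun p => q (p.1 * α + p.2 * β - s * (β / 2)) * f (p.1, p.2 - s)

/-- The multiplication operator `(H̃ f)(x,y) = (xα+yβ)·f(x,y)`. -/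
def opH (α β : ℝ) (f : ℤ × ℤ → ℂ) : ℤ × ℤ → ℂ :=
  fun p => ((p.1 * α + p.2 * β : ℝ) : ℂ) * f p

/-- `Γ(L_ξ)`: the `ξ`-twisted `(m,n)`-periodic functions on `ℤ²`. -/
def GammaSet (m n : ℤ) (ξ : ℂ) : Set (ℤ × ℤ → ℂ) :=
  {f | ∀ x y : ℤ, f (x - m, y - n) = ξ * f (x, y)}

/-- `Γ₀(L_ξ)`: elements of `Γ(L_ξ)` supported on finitely many `ℤ·(m,n)`-cosets. -/
def Gamma0Set (m n : ℤ) (ξ : ℂ) : Set (ℤ × ℤ → ℂ) :=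
  {f | f ∈ GammaSet m n ξ ∧
    ∃ S : Finset (ℤ × ℤ), ∀ p : ℤ × ℤ, f p ≠ 0 →
      ∃ q ∈ S, ∃ k : ℤ, p = (q.1 + k * m, q.2 + k * n)}


section AuxStmt11

private lemma PfunR_eq_prod' (ℒ : ℝ → ℕ) (h : (Function.support ℒ).Finite) (u : ℝ) :
    PfunR ℒ u = ∏ e ∈ h.toFinset, (u - e) ^ ℒ e := by
  apply finprod_eq_prod_of_mulSupport_subset
  intro e he
  simp only [Function.mem_mulSupport] at he
  simp only [Set.Finite.coe_toFinset, Function.mem_support]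
  intro h0
  exact he (by rw [h0, pow_zero])

private lemma lfun_eq_sum' (ℒ : ℝ → ℕ) (h : (Function.support ℒ).Finite) (u : ℝ) :
    lfun ℒ u = ∑ e ∈ h.toFinset, if u < e then ℒ e else 0 := by
  apply finsum_eq_sum_of_support_subset
  intro e he
  simp only [Function.mem_support] at he
  simp only [Set.Finite.coe_toFinset, Function.mem_support]
  intro h0
  apply he
  rw [h0]; simp

private lemma sign_Pfun' (ℒ : ℝ → ℕ) (h : (Function.support ℒ).Finite) (u : ℝ) :
    ((-1 : ℝ)) ^ lfun ℒ u * |PfunR ℒ u| = PfunR ℒ u := by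
  rw [PfunR_eq_prod' ℒ h u, lfun_eq_sum' ℒ h u, Finset.abs_prod,
    ← Finset.prod_pow_eq_pow_sum, ← Finset.prod_mul_distrib]
  apply Finset.prod_congr rfl
  intro e _
  by_cases hc : u < e
  · simp only [hc, if_true]
    rw [_root_.abs_pow, ← mul_pow]
    congr 1
    rw [_root_.abs_of_nonpos (by linarith)]
    ring
  · simp only [hc, if_false, pow_zero, one_mul, _root_.abs_pow]
    rw [_root_.abs_of_nonneg (by push_neg at hc; linarith)]

private lemma qfun_mul_self' (ℒ : ℝ → ℕ) (h : (Function.support ℒ).Finite) (u : ℝ) :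
    qfun ℒ u * qfun ℒ u = ((PfunR ℒ u : ℝ) : ℂ) := by
  unfold qfun
  have h1 : (Complex.I ^ lfun ℒ u) * (Complex.I ^ lfun ℒ u) = ((-1 : ℝ) : ℂ) ^ lfun ℒ u := by
    rw [← pow_add, ← two_mul, pow_mul]
    norm_num
  have h2 : ((Real.sqrt |PfunR ℒ u| : ℝ) : ℂ) * ((Real.sqrt |PfunR ℒ u| : ℝ) : ℂ)
      = ((|PfunR ℒ u| : ℝ) : ℂ) := by
    norm_cast
    exact Real.mul_self_sqrt (abs_nonneg _)
  calc Complex.I ^ lfun ℒ u * (Real.sqrt |PfunR ℒ u| : ℂ) *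
        (Complex.I ^ lfun ℒ u * (Real.sqrt |PfunR ℒ u| : ℂ))
      = ((-1 : ℝ) : ℂ) ^ lfun ℒ u * ((|PfunR ℒ u| : ℝ) : ℂ) := by
        rw [← h1, ← h2]; ring
    _ = (((-1 : ℝ) ^ lfun ℒ u * |PfunR ℒ u| : ℝ) : ℂ) := by push_cast; ring
    _ = ((PfunR ℒ u : ℝ) : ℂ) := by rw [sign_Pfun' ℒ h u]

private lemma supp_shift_fin' (ℒ : ℝ → ℕ) (h : (Function.support ℒ).Finite) (c : ℝ) :
    (Function.support fun w : ℝ => ℒ (w - c)).Finite := by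
  have : (Function.support fun w : ℝ => ℒ (w - c))
      = (fun w : ℝ => w - c) ⁻¹' Function.support ℒ := rfl
  rw [this]
  exact h.preimage (fun a _ b _ hab => by linarith)

private lemma PfunR_shift' (ℒ : ℝ → ℕ) (c v : ℝ) :
    PfunR ℒ (v - c) = ∏ᶠ w : ℝ, (v - w) ^ ℒ (w - c) := by
  unfold PfunR
  rw [← finprod_comp_equiv (Equiv.subRight c) (f := fun e => (v - c - e) ^ ℒ e)]
  apply finprod_congr
  intro w
  simp only [Equiv.subRight_apply]
  congr 1
  ring

private lemma lfun_shift' (ℒ : ℝ → ℕ) (c v : ℝ) :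
    lfun ℒ (v - c) = ∑ᶠ w : ℝ, if v < w then ℒ (w - c) else 0 := by
  unfold lfun
  rw [← finsum_comp_equiv (Equiv.subRight c) (f := fun e => if v - c < e then ℒ e else 0)]
  apply finsum_congr
  intro w
  simp only [Equiv.subRight_apply]
  congr 1
  simp [sub_lt_sub_iff_right]

private lemma star_lemma' (α β : ℝ) (ℒ₁ ℒ₂ : ℝ → ℕ)
    (h1 : (Function.support ℒ₁).Finite) (h2 : (Function.support ℒ₂).Finite)
    (hA : ∀ w : ℝ, ℒ₁ (w - β / 2) + ℒ₂ (w - α / 2) = ℒ₁ (w + β / 2) + ℒ₂ (w + α / 2))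
    (v : ℝ) :
    qfun ℒ₁ (v - β / 2) * qfun ℒ₂ (v - α / 2) =
      qfun ℒ₁ (v + β / 2) * qfun ℒ₂ (v + α / 2) := by
  have e1p : ∀ w : ℝ, w - -(β / 2) = w + β / 2 := fun w => by ring
  have e2p : ∀ w : ℝ, w - -(α / 2) = w + α / 2 := fun w => by ring
  have hP : PfunR ℒ₁ (v - β / 2) * PfunR ℒ₂ (v - α / 2) =
      PfunR ℒ₁ (v + β / 2) * PfunR ℒ₂ (v + α / 2) := by
    have l1 : PfunR ℒ₁ (v + β / 2) = ∏ᶠ w : ℝ, (v - w) ^ ℒ₁ (w + β / 2) := by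
      rw [show v + β / 2 = v - -(β / 2) by ring, PfunR_shift']
      exact finprod_congr fun w => by rw [e1p]
    have l2 : PfunR ℒ₂ (v + α / 2) = ∏ᶠ w : ℝ, (v - w) ^ ℒ₂ (w + α / 2) := by
      rw [show v + α / 2 = v - -(α / 2) by ring, PfunR_shift']
      exact finprod_congr fun w => by rw [e2p]
    rw [PfunR_shift' ℒ₁ (β / 2) v, PfunR_shift' ℒ₂ (α / 2) v, l1, l2]
    have ms : ∀ (ℒ : ℝ → ℕ) (c : ℝ), (Function.support ℒ).Finite →
        (Function.mulSupport fun w : ℝ => (v - w) ^ ℒ (w - c)).Finite := by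
      intro ℒ c hfin
      apply (supp_shift_fin' ℒ hfin c).subset
      intro w hw
      simp only [Function.mem_mulSupport] at hw
      simp only [Function.mem_support]
      intro h0
      exact hw (by rw [h0, pow_zero])
    have msp : ∀ (ℒ : ℝ → ℕ) (c : ℝ), (Function.support ℒ).Finite →
        (Function.mulSupport fun w : ℝ => (v - w) ^ ℒ (w + c)).Finite := by
      intro ℒ c hfin
      have := ms ℒ (-c) hfin
      simpa [sub_neg_eq_add] using this
    rw [← finprod_mul_distrib (ms ℒ₁ (β/2) h1) (ms ℒ₂ (α/2) h2),
      ← finprod_mul_distrib (msp ℒ₁ (β/2) h1) (msp ℒ₂ (α/2) h2)]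
    apply finprod_congr
    intro w
    rw [← pow_add, ← pow_add, hA w]
  have hl : lfun ℒ₁ (v - β / 2) + lfun ℒ₂ (v - α / 2) =
      lfun ℒ₁ (v + β / 2) + lfun ℒ₂ (v + α / 2) := by
    have l1 : lfun ℒ₁ (v + β / 2) = ∑ᶠ w : ℝ, if v < w then ℒ₁ (w + β / 2) else 0 := by
      rw [show v + β / 2 = v - -(β / 2) by ring, lfun_shift']
      exact finsum_congr fun w => by rw [e1p]
    have l2 : lfun ℒ₂ (v + α / 2) = ∑ᶠ w : ℝ, if v < w then ℒ₂ (w + α / 2) else 0 := by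
      rw [show v + α / 2 = v - -(α / 2) by ring, lfun_shift']
      exact finsum_congr fun w => by rw [e2p]
    have ss : ∀ (ℒ : ℝ → ℕ) (c : ℝ), (Function.support ℒ).Finite →
        (Function.support fun w : ℝ => if v < w then ℒ (w - c) else 0).Finite := by
      intro ℒ c hfin
      apply (supp_shift_fin' ℒ hfin c).subset
      intro w hw
      simp only [Function.mem_support] at hw ⊢
      intro h0
      exact hw (by rw [h0]; simp)
    have ssp : ∀ (ℒ : ℝ → ℕ) (c : ℝ), (Function.support ℒ).Finite →
        (Function.support fun w : ℝ => if v < w then ℒ (w + c) else 0).Finite := by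
      intro ℒ c hfin
      have := ss ℒ (-c) hfin
      simpa [sub_neg_eq_add] using this
    rw [lfun_shift' ℒ₁ (β / 2) v, lfun_shift' ℒ₂ (α / 2) v, l1, l2,
      ← finsum_add_distrib (ss ℒ₁ (β/2) h1) (ss ℒ₂ (α/2) h2),
      ← finsum_add_distrib (ssp ℒ₁ (β/2) h1) (ssp ℒ₂ (α/2) h2)]
    apply finsum_congr
    intro w
    by_cases hc : v < w
    · simp only [hc, if_true]; exact hA w
    · simp [hc]
  unfold qfun
  have key : ∀ (a b : ℝ) (ℒa ℒb : ℝ → ℕ),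
      Complex.I ^ lfun ℒa a * (Real.sqrt |PfunR ℒa a| : ℂ) *
        (Complex.I ^ lfun ℒb b * (Real.sqrt |PfunR ℒb b| : ℂ)) =
      Complex.I ^ (lfun ℒa a + lfun ℒb b) *
        ((Real.sqrt |PfunR ℒa a * PfunR ℒb b| : ℝ) : ℂ) := by
    intro a b ℒa ℒb
    rw [pow_add, abs_mul, Real.sqrt_mul (abs_nonneg _)]
    push_cast
    ring
  rw [key, key, hl, hP]

private lemma lemA' {α β : ℝ} {ℒ₁ ℒ₂ : ℝ → ℕ} (hconf : Config α β ℒ₁ ℒ₂) (w : ℝ) :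
    ℒ₁ (w - β / 2) + ℒ₂ (w - α / 2) = ℒ₁ (w + β / 2) + ℒ₂ (w + α / 2) := by
  by_cases hv : w ∈ latV α β
  · exact (hconf.conserv w hv).symm
  · have h1m : ℒ₁ (w - β / 2) = 0 := by
      by_contra h
      obtain ⟨x, y, hxy⟩ := hconf.supp1 _ h
      exact hv ⟨x, y, by linarith⟩
    have h2m : ℒ₂ (w - α / 2) = 0 := by
      by_contra h
      obtain ⟨x, y, hxy⟩ := hconf.supp2 _ h
      exact hv ⟨x, y, by linarith⟩
    have h1p : ℒ₁ (w + β / 2) = 0 := by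
      by_contra h
      obtain ⟨x, y, hxy⟩ := hconf.supp1 _ h
      exact hv ⟨x, y - 1, by push_cast; linarith⟩
    have h2p : ℒ₂ (w + α / 2) = 0 := by
      by_contra h
      obtain ⟨x, y, hxy⟩ := hconf.supp2 _ h
      exact hv ⟨x - 1, y, by push_cast; linarith⟩
    rw [h1m, h2m, h1p, h2p]

end AuxStmt11

/-- The operators `X̃ᵢ^±, H̃` map `Γ₀(L_ξ)` into itself and satisfy on `Γ₀(L_ξ)` the
defining relations of `𝒜̃(𝓛)`: (i) `[H̃, X̃ᵢ^±] = ±αᵢ X̃ᵢ^±`; (ii)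
`X̃ᵢ^± ∘ X̃ᵢ^∓ = Pᵢ(H̃ ∓ αᵢ/2)`; (iii) `[X̃₁^±, X̃₂^∓] = 0`. -/
theorem stmt11 (m n : ℕ) (hmn : Nat.Coprime m n) (α β : ℝ)
    (hαβ : (α, β) ≠ ((0 : ℝ), (0 : ℝ))) (hlin : (m : ℝ) * α + (n : ℝ) * β = 0)
    (ℒ₁ ℒ₂ : ℝ → ℕ) (hconf : Config α β ℒ₁ ℒ₂) (ξ : ℂ) (hξ : ξ ≠ 0) :
    -- the operators preserve Γ₀(L_ξ)
    (∀ f ∈ Gamma0Set (m : ℤ) (n : ℤ) ξ, ∀ s : ℤ, s = 1 ∨ s = -1 →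
      opX1 (qfun ℒ₁) α β s f ∈ Gamma0Set (m : ℤ) (n : ℤ) ξ ∧
      opX2 (qfun ℒ₂) α β s f ∈ Gamma0Set (m : ℤ) (n : ℤ) ξ) ∧
    (∀ f ∈ Gamma0Set (m : ℤ) (n : ℤ) ξ, opH α β f ∈ Gamma0Set (m : ℤ) (n : ℤ) ξ) ∧
    -- (i) [H̃, X̃ᵢ^s] = s·αᵢ·X̃ᵢ^s on Γ₀(L_ξ)
    (∀ f ∈ Gamma0Set (m : ℤ) (n : ℤ) ξ, ∀ s : ℤ, s = 1 ∨ s = -1 → ∀ p : ℤ × ℤ,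
      opH α β (opX1 (qfun ℒ₁) α β s f) p - opX1 (qfun ℒ₁) α β s (opH α β f) p =
        ((s : ℂ) * (α : ℂ)) * opX1 (qfun ℒ₁) α β s f p ∧
      opH α β (opX2 (qfun ℒ₂) α β s f) p - opX2 (qfun ℒ₂) α β s (opH α β f) p =
        ((s : ℂ) * (β : ℂ)) * opX2 (qfun ℒ₂) α β s f p) ∧
    -- (ii) X̃ᵢ^s ∘ X̃ᵢ^{-s} = Pᵢ(xα+yβ − s·αᵢ/2) on Γ₀(L_ξ)
    (∀ f ∈ Gamma0Set (m : ℤ) (n : ℤ) ξ, ∀ s : ℤ, s = 1 ∨ s = -1 → ∀ p : ℤ × ℤ,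
      opX1 (qfun ℒ₁) α β s (opX1 (qfun ℒ₁) α β (-s) f) p =
        (PfunR ℒ₁ (p.1 * α + p.2 * β - s * (α / 2)) : ℂ) * f p ∧
      opX2 (qfun ℒ₂) α β s (opX2 (qfun ℒ₂) α β (-s) f) p =
        (PfunR ℒ₂ (p.1 * α + p.2 * β - s * (β / 2)) : ℂ) * f p) ∧
    -- (iii) X̃₁^± and X̃₂^∓ commute on Γ₀(L_ξ)
    (∀ f ∈ Gamma0Set (m : ℤ) (n : ℤ) ξ,
      opX1 (qfun ℒ₁) α β 1 (opX2 (qfun ℒ₂) α β (-1) f) =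
        opX2 (qfun ℒ₂) α β (-1) (opX1 (qfun ℒ₁) α β 1 f) ∧
      opX1 (qfun ℒ₁) α β (-1) (opX2 (qfun ℒ₂) α β 1 f) =
        opX2 (qfun ℒ₂) α β 1 (opX1 (qfun ℒ₁) α β (-1) f)) := by
  have hA := lemA' hconf
  have hstar := star_lemma' α β ℒ₁ ℒ₂ hconf.fin1 hconf.fin2 hA
  refine ⟨?_, ?_, ?_, ?_, ?_⟩
  · -- preservation by X operators
    rintro f ⟨hper, S, hS⟩ s _
    constructor
    · constructor
      · intro x y
        simp only [opX1]
        have harg : ((x - m : ℤ) : ℝ) * α + ((y - n : ℤ) : ℝ) * β - (s : ℝ) * (α / 2)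
            = (x : ℝ) * α + (y : ℝ) * β - (s : ℝ) * (α / 2) := by
          push_cast
          linear_combination -hlin
        rw [harg, show x - (m : ℤ) - s = x - s - (m : ℤ) by ring, hper (x - s) y]
        ring
      · refine ⟨S.image (fun q => (q.1 + s, q.2)), ?_⟩
        intro p hp
        have hf : f (p.1 - s, p.2) ≠ 0 := by
          intro h
          exact hp (by simp [opX1, h])
        obtain ⟨q, hq, k, hk⟩ := hS _ hf
        refine ⟨(q.1 + s, q.2), Finset.mem_image_of_mem _ hq, k, ?_⟩
        rw [Prod.ext_iff] at hk ⊢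
        simp only at hk ⊢
        omega
    · constructor
      · intro x y
        simp only [opX2]
        have harg : ((x - m : ℤ) : ℝ) * α + ((y - n : ℤ) : ℝ) * β - (s : ℝ) * (β / 2)
            = (x : ℝ) * α + (y : ℝ) * β - (s : ℝ) * (β / 2) := by
          push_cast
          linear_combination -hlin
        rw [harg, show y - (n : ℤ) - s = y - s - (n : ℤ) by ring, hper x (y - s)]
        ring
      · refine ⟨S.image (fun q => (q.1, q.2 + s)), ?_⟩
        intro p hp
        have hf : f (p.1, p.2 - s) ≠ 0 := by
          intro h
          exact hp (by simp [opX2, h])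
        obtain ⟨q, hq, k, hk⟩ := hS _ hf
        refine ⟨(q.1, q.2 + s), Finset.mem_image_of_mem _ hq, k, ?_⟩
        rw [Prod.ext_iff] at hk ⊢
        simp only at hk ⊢
        omega
  · -- preservation by H
    rintro f ⟨hper, S, hS⟩
    constructor
    · intro x y
      simp only [opH]
      have harg : ((x - m : ℤ) : ℝ) * α + ((y - n : ℤ) : ℝ) * β
          = (x : ℝ) * α + (y : ℝ) * β := by
        push_cast
        linear_combination -hlin
      rw [harg, hper x y]
      ring
    · refine ⟨S, ?_⟩
      intro p hp
      have hf : f p ≠ 0 := by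
        intro h
        exact hp (by simp [opH, h])
      exact hS p hf
  · -- relation (i)
    rintro f - s - p
    constructor
    · simp only [opH, opX1]
      push_cast
      ring
    · simp only [opH, opX2]
      push_cast
      ring
  · -- relation (ii)
    rintro f - s - p
    constructor
    · simp only [opX1]
      have hpt : (p.1 - s - -s, p.2) = p := by
        rw [Prod.ext_iff]
        constructor
        · omega
        · rfl
      have harg : ((p.1 - s : ℤ) : ℝ) * α + (p.2 : ℝ) * β - ((-s : ℤ) : ℝ) * (α / 2)
          = (p.1 : ℝ) * α + (p.2 : ℝ) * β - (s : ℝ) * (α / 2) := by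
        push_cast; ring
      rw [hpt, harg, ← mul_assoc, qfun_mul_self' ℒ₁ hconf.fin1]
    · simp only [opX2]
      have hpt : (p.1, p.2 - s - -s) = p := by
        rw [Prod.ext_iff]
        constructor
        · rfl
        · omega
      have harg : (p.1 : ℝ) * α + ((p.2 - s : ℤ) : ℝ) * β - ((-s : ℤ) : ℝ) * (β / 2)
          = (p.1 : ℝ) * α + (p.2 : ℝ) * β - (s : ℝ) * (β / 2) := by
        push_cast; ring
      rw [hpt, harg, ← mul_assoc, qfun_mul_self' ℒ₂ hconf.fin2]
  · -- relation (iii)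
    rintro f -
    constructor
    · funext p
      simp only [opX1, opX2]
      have h := hstar ((p.1 : ℝ) * α + (p.2 : ℝ) * β + β / 2 - α / 2)
      have eA : (p.1 : ℝ) * α + (p.2 : ℝ) * β - ((1 : ℤ) : ℝ) * (α / 2)
          = (p.1 : ℝ) * α + (p.2 : ℝ) * β + β / 2 - α / 2 - β / 2 := by push_cast; ring
      have eB : ((p.1 - 1 : ℤ) : ℝ) * α + (p.2 : ℝ) * β - ((-1 : ℤ) : ℝ) * (β / 2)
          = (p.1 : ℝ) * α + (p.2 : ℝ) * β + β / 2 - α / 2 - α / 2 := by push_cast; ring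
      have eC : (p.1 : ℝ) * α + (p.2 : ℝ) * β - ((-1 : ℤ) : ℝ) * (β / 2)
          = (p.1 : ℝ) * α + (p.2 : ℝ) * β + β / 2 - α / 2 + α / 2 := by push_cast; ring
      have eD : (p.1 : ℝ) * α + ((p.2 - -1 : ℤ) : ℝ) * β - ((1 : ℤ) : ℝ) * (α / 2)
          = (p.1 : ℝ) * α + (p.2 : ℝ) * β + β / 2 - α / 2 + β / 2 := by push_cast; ring
      rw [eA, eB, eC, eD]
      linear_combination f (p.1 - 1, p.2 - -1) * h
    · funext p
      simp only [opX1, opX2]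
      have h := hstar ((p.1 : ℝ) * α + (p.2 : ℝ) * β + α / 2 - β / 2)
      have eA : (p.1 : ℝ) * α + (p.2 : ℝ) * β - ((-1 : ℤ) : ℝ) * (α / 2)
          = (p.1 : ℝ) * α + (p.2 : ℝ) * β + α / 2 - β / 2 + β / 2 := by push_cast; ring
      have eB : ((p.1 - -1 : ℤ) : ℝ) * α + (p.2 : ℝ) * β - ((1 : ℤ) : ℝ) * (β / 2)
          = (p.1 : ℝ) * α + (p.2 : ℝ) * β + α / 2 - β / 2 + α / 2 := by push_cast; ring
      have eC : (p.1 : ℝ) * α + (p.2 : ℝ) * β - ((1 : ℤ) : ℝ) * (β / 2)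
          = (p.1 : ℝ) * α + (p.2 : ℝ) * β + α / 2 - β / 2 - α / 2 := by push_cast; ring
      have eD : (p.1 : ℝ) * α + ((p.2 - 1 : ℤ) : ℝ) * β - ((-1 : ℤ) : ℝ) * (α / 2)
          = (p.1 : ℝ) * α + (p.2 : ℝ) * β + α / 2 - β / 2 - β / 2 := by push_cast; ring
      rw [eA, eB, eC, eD]
      linear_combination -(f (p.1 - -1, p.2 - 1)) * h

end
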